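/- (Nonsingularity of the reduced Riccati solution.) Let X : ℝ≥0 → ℝ^{4×4} be continuous and bounded, R : ℝ≥0 → ℝ^{4×4} continuous with R(t) ≽ r I for some r > 0, and ε > 0. Suppose P : ℝ≥0 → ℝ^{4×4} is a symmetric solution of the Riccati differential equation Ṗ = X(t)P + PXᵀ(t) − P R(t)⁻¹ P + εI with P(0) ≽ 0. Then P(t) is positive definite (in particular nonsingular) for every t > 0. -/

import Mathlib

open Matrix Set Real Filter

namespace Stmt17Aux

noncomputable def projB (ρ : ℝ) (x : Fin 4 → ℝ) : Fin 4 → ℝ := min 1 (ρ / ‖x‖) • x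

lemma min_nonneg' {ρ : ℝ} (hρ : 0 ≤ ρ) (x : Fin 4 → ℝ) : 0 ≤ min 1 (ρ / ‖x‖) :=
  le_min zero_le_one (div_nonneg hρ (norm_nonneg _))

lemma projB_eq_self {ρ : ℝ} {x : Fin 4 → ℝ} (h : ‖x‖ ≤ ρ) : projB ρ x = x := by
  rcases eq_or_ne x 0 with rfl | hx
  · simp [projB]
  · have hx' : 0 < ‖x‖ := norm_pos_iff.2 hx
    have h1 : (1:ℝ) ≤ ρ / ‖x‖ := (one_le_div hx').2 h
    simp [projB, min_eq_left h1]

lemma norm_projB_le_self {ρ : ℝ} (hρ : 0 ≤ ρ) (x : Fin 4 → ℝ) : ‖projB ρ x‖ ≤ ‖x‖ := by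
  rw [projB, norm_smul, Real.norm_eq_abs, abs_of_nonneg (min_nonneg' hρ x)]
  nlinarith [min_le_left 1 (ρ / ‖x‖), norm_nonneg x, min_nonneg' hρ x]

lemma norm_projB_le {ρ : ℝ} (hρ : 0 ≤ ρ) (x : Fin 4 → ℝ) : ‖projB ρ x‖ ≤ ρ := by
  rcases le_or_gt ‖x‖ ρ with h | h
  · exact (norm_projB_le_self hρ x).trans h
  · have hx' : 0 < ‖x‖ := lt_of_le_of_lt hρ h
    rw [projB, norm_smul, Real.norm_eq_abs, abs_of_nonneg (min_nonneg' hρ x)]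
    have h2 : min 1 (ρ/‖x‖) ≤ ρ/‖x‖ := min_le_right _ _
    calc min 1 (ρ/‖x‖) * ‖x‖ ≤ (ρ/‖x‖) * ‖x‖ := by nlinarith
      _ = ρ := by field_simp

lemma projB_lip_aux {ρ : ℝ} (hρ : 0 < ρ) {x y : Fin 4 → ℝ} (hxy : ‖y‖ ≤ ‖x‖) :
    ‖projB ρ x - projB ρ y‖ ≤ 2 * ‖x - y‖ := by
  rcases eq_or_ne y 0 with rfl | hy
  · have h0 : projB ρ (0 : Fin 4 → ℝ) = 0 := by simp [projB]
    rw [h0, sub_zero, sub_zero]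
    have h1 := norm_projB_le_self hρ.le x
    linarith [norm_nonneg x]
  · have hy' : 0 < ‖y‖ := norm_pos_iff.2 hy
    have hx' : 0 < ‖x‖ := lt_of_lt_of_le hy' hxy
    set a := ‖y‖ with ha
    set b := ‖x‖ with hb
    set c := min 1 (ρ / b) with hc
    set d := min 1 (ρ / a) with hd
    have hc0 : 0 ≤ c := le_min zero_le_one (div_nonneg hρ.le hx'.le)
    have hc1 : c ≤ 1 := min_le_left _ _
    have hd1 : d ≤ 1 := min_le_left _ _
    have hcd : c ≤ d := min_le_min le_rfl (by gcongr)
    have hca : c * b = min b ρ := by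
      rcases le_total ρ b with h | h
      · rw [min_eq_right h, hc, min_eq_right ((div_le_one hx').2 h)]; field_simp
      · rw [min_eq_left h, hc, min_eq_left ((one_le_div hx').2 h), one_mul]
    have hda : d * a = min a ρ := by
      rcases le_total ρ a with h | h
      · rw [min_eq_right h, hd, min_eq_right ((div_le_one hy').2 h)]; field_simp
      · rw [min_eq_left h, hd, min_eq_left ((one_le_div hy').2 h), one_mul]
    have key2 : min a ρ * b - min b ρ * a ≤ (b - a) * b := by
      rcases le_total a ρ with h1 | h1
      · rcases le_total b ρ with h2 | h2
        · rw [min_eq_left h1, min_eq_left h2]; nlinarith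
        · rw [min_eq_left h1, min_eq_right h2]; nlinarith [sq_nonneg (b - a)]
      · have h2 : ρ ≤ b := h1.trans hxy
        rw [min_eq_right h1, min_eq_right h2]; nlinarith
    have key : (d - c) * a ≤ b - a := by
      have h1 : ((d - c) * a) * b ≤ (b - a) * b := by
        have h2 : (d * a) * b - (c * b) * a ≤ (b - a) * b := by rw [hca, hda]; exact key2
        nlinarith [h2]
      exact le_of_mul_le_mul_right h1 hx'
    have hsplit : projB ρ x - projB ρ y = c • (x - y) + (c - d) • y := by
      rw [projB, projB, ← hb, ← ha, ← hc, ← hd, smul_sub, sub_smul]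
      abel
    have hnorm : b - a ≤ ‖x - y‖ := norm_sub_norm_le x y
    calc ‖projB ρ x - projB ρ y‖ ≤ ‖c • (x - y)‖ + ‖(c - d) • y‖ := by
          rw [hsplit]; exact norm_add_le _ _
      _ = c * ‖x - y‖ + (d - c) * a := by
          rw [norm_smul, norm_smul, Real.norm_eq_abs, Real.norm_eq_abs,
            abs_of_nonneg hc0, abs_of_nonpos (by linarith : c - d ≤ 0)]
          ring
      _ ≤ 1 * ‖x - y‖ + (b - a) := by
          have := norm_nonneg (x - y)
          gcongr
      _ ≤ ‖x - y‖ + ‖x - y‖ := by rw [one_mul]; gcongr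
      _ = 2 * ‖x - y‖ := by ring

lemma projB_lip {ρ : ℝ} (hρ : 0 < ρ) (x y : Fin 4 → ℝ) :
    ‖projB ρ x - projB ρ y‖ ≤ 2 * ‖x - y‖ := by
  rcases le_total ‖y‖ ‖x‖ with h | h
  · exact projB_lip_aux hρ h
  · rw [norm_sub_rev, norm_sub_rev x y]; exact projB_lip_aux hρ h

lemma mulVec_norm_le {K : ℝ} {M : Matrix (Fin 4) (Fin 4) ℝ} (hK : ∀ i j, |M i j| ≤ K)
    (x : Fin 4 → ℝ) : ‖M *ᵥ x‖ ≤ 4 * K * ‖x‖ := by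
  have hK0 : 0 ≤ K := (abs_nonneg _).trans (hK 0 0)
  have h4 : 0 ≤ 4 * K * ‖x‖ := by positivity
  rw [pi_norm_le_iff_of_nonneg h4]
  intro i
  rw [Real.norm_eq_abs]
  calc |(M *ᵥ x) i| = |∑ j, M i j * x j| := by simp [mulVec, dotProduct]
    _ ≤ ∑ j, |M i j * x j| := Finset.abs_sum_le_sum_abs _ _
    _ ≤ ∑ _j : Fin 4, K * ‖x‖ := Finset.sum_le_sum fun j _ => by
        rw [abs_mul]
        exact mul_le_mul (hK i j) ((Real.norm_eq_abs (x j)) ▸ norm_le_pi_norm x j)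
          (abs_nonneg _) hK0
    _ = 4 * K * ‖x‖ := by simp [Finset.sum_const]; ring

lemma cancel_identity (A Pm : Matrix (Fin 4) (Fin 4) ℝ) (hsym : Pmᵀ = Pm) (ε : ℝ)
    (a : Fin 4 → ℝ) :
    (-(Aᵀ *ᵥ a)) ⬝ᵥ (Pm *ᵥ a)
      + a ⬝ᵥ ((A * Pm + Pm * Aᵀ + ε • (1 : Matrix (Fin 4) (Fin 4) ℝ)) *ᵥ a)
      + a ⬝ᵥ (Pm *ᵥ (-(Aᵀ *ᵥ a))) = ε * (a ⬝ᵥ a) := by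
  have h1 : a ⬝ᵥ ((A * Pm) *ᵥ a) = (Aᵀ *ᵥ a) ⬝ᵥ (Pm *ᵥ a) := by
    rw [← mulVec_mulVec, dotProduct_mulVec, ← mulVec_transpose]
  have h2 : a ⬝ᵥ ((Pm * Aᵀ) *ᵥ a) = a ⬝ᵥ (Pm *ᵥ (Aᵀ *ᵥ a)) := by rw [mulVec_mulVec]
  rw [add_mulVec, add_mulVec, dotProduct_add, dotProduct_add, h1, h2, smul_mulVec,
    one_mulVec, dotProduct_smul, mulVec_neg, dotProduct_neg, neg_dotProduct, smul_eq_mul]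
  ring

lemma sum_to_dot (Pm Q : Matrix (Fin 4) (Fin 4) ℝ) (a a' : Fin 4 → ℝ) :
    ∑ i : Fin 4, ∑ j : Fin 4, (a' i * (Pm i j * a j) + a i * (Q i j * a j + Pm i j * a' j))
      = a' ⬝ᵥ (Pm *ᵥ a) + a ⬝ᵥ (Q *ᵥ a) + a ⬝ᵥ (Pm *ᵥ a') := by
  simp only [dotProduct, mulVec, Finset.mul_sum, ← Finset.sum_add_distrib]
  exact Finset.sum_congr rfl fun i _ => Finset.sum_congr rfl fun j _ => by ring

end Stmt17Aux

set_option maxHeartbeats 1000000 in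
open Stmt17Aux in
theorem stmt17 (X : ℝ → Matrix (Fin 4) (Fin 4) ℝ) (R : ℝ → Matrix (Fin 4) (Fin 4) ℝ)
    (P : ℝ → Matrix (Fin 4) (Fin 4) ℝ) (r ε : ℝ) (hr : 0 < r) (hε : 0 < ε)
    (hXcont : ∀ i j, Continuous fun t => X t i j)
    (hXbdd : ∃ B : ℝ, ∀ (t : ℝ) (i j : Fin 4), |X t i j| ≤ B)
    (hRcont : ∀ i j, Continuous fun t => R t i j)
    (hRlb : ∀ t : ℝ, 0 ≤ t → (R t - r • (1 : Matrix (Fin 4) (Fin 4) ℝ)).PosSemidef)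
    (hPsymm : ∀ t : ℝ, 0 ≤ t → (P t).IsSymm)
    (hP : ∀ t : ℝ, 0 ≤ t → ∀ i j,
      HasDerivAt (fun s => P s i j)
        ((X t * P t + P t * (X t)ᵀ - P t * (R t)⁻¹ * P t +
          ε • (1 : Matrix (Fin 4) (Fin 4) ℝ)) i j) t)
    (hP0 : (P 0).PosSemidef) :
    ∀ t : ℝ, 0 < t → (P t).PosDef := by
  -- symmetry and positive-definiteness of R
  have hRsymm : ∀ t : ℝ, 0 ≤ t → (R t)ᵀ = R t := by
    intro t ht
    have h := (hRlb t ht).1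
    rw [Matrix.IsHermitian, conjTranspose_eq_transpose_of_trivial, transpose_sub,
      transpose_smul, transpose_one, sub_left_inj] at h
    exact h
  have hRpd : ∀ t : ℝ, 0 ≤ t → (R t).PosDef := by
    intro t ht
    have h1 : (r • (1 : Matrix (Fin 4) (Fin 4) ℝ)).PosDef := by
      refine Matrix.PosDef.of_dotProduct_mulVec_pos ?_ (fun x hx => ?_)
      · rw [Matrix.IsHermitian, conjTranspose_eq_transpose_of_trivial, transpose_smul,
          transpose_one]
      · have hmv : (r • (1 : Matrix (Fin 4) (Fin 4) ℝ)) *ᵥ x = r • x := by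
          rw [smul_mulVec, one_mulVec]
        have hst : star x = x := funext fun i => star_trivial _
        rw [hmv, hst, dotProduct_smul, smul_eq_mul]
        have hxx : 0 < x ⬝ᵥ x := by
          have h0 : 0 ≤ x ⬝ᵥ x := Finset.sum_nonneg fun i _ => mul_self_nonneg _
          rcases h0.lt_or_eq with h | h
          · exact h
          · exact absurd (dotProduct_self_eq_zero.1 h.symm) hx
        exact mul_pos hr hxx
    have heq : R t = (R t - r • 1) + r • 1 := by abel
    rw [heq]
    exact Matrix.PosDef.posSemidef_add (hRlb t ht) h1
  have hRdet : ∀ t : ℝ, 0 ≤ t → (R t).det ≠ 0 := fun t ht => (hRpd t ht).det_pos.ne'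
  have hRmat : Continuous R := continuous_matrix fun i j => hRcont i j
  have hRinvcont : ∀ i j, ContinuousOn (fun s => (R s)⁻¹ i j) (Ici 0) := by
    intro i j
    have hdet : Continuous fun s => (R s).det := hRmat.matrix_det
    have hadj : Continuous fun s => (R s).adjugate i j := (hRmat.matrix_adjugate).matrix_elem i j
    have heq : ∀ s ∈ Ici (0:ℝ), ((R s).det)⁻¹ * (R s).adjugate i j = (R s)⁻¹ i j := by
      intro s _
      rw [Matrix.inv_def, Ring.inverse_eq_inv, Matrix.smul_apply, smul_eq_mul]
    exact ContinuousOn.congr ((hdet.continuousOn.inv₀ fun s hs => hRdet s hs).mul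
      hadj.continuousOn) fun s hs => (heq s hs).symm
  have hPcont : ∀ i j, ContinuousOn (fun s => P s i j) (Ici 0) :=
    fun i j s hs => ((hP s hs i j).continuousAt).continuousWithinAt
  set A : ℝ → Matrix (Fin 4) (Fin 4) ℝ := fun s => X s - (2⁻¹ : ℝ) • (P s * (R s)⁻¹)
    with hAdef
  have hAcont : ∀ i j, ContinuousOn (fun s => A s i j) (Ici 0) := by
    intro i j
    have h1 : ContinuousOn (fun s => (P s * (R s)⁻¹) i j) (Ici 0) := by
      simp only [Matrix.mul_apply]
      exact continuousOn_finset_sum _ fun k _ => (hPcont i k).mul (hRinvcont k j)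
    have h2 : ContinuousOn (fun s => X s i j - (2⁻¹:ℝ) * (P s * (R s)⁻¹) i j) (Ici 0) :=
      ((hXcont i j).continuousOn).sub (h1.const_smul (2⁻¹:ℝ))
    refine h2.congr fun s _ => ?_
    simp [hAdef, Matrix.sub_apply, Matrix.smul_apply, smul_eq_mul]
  have hPder : ∀ s : ℝ, 0 ≤ s → ∀ i j,
      HasDerivAt (fun u => P u i j)
        ((A s * P s + P s * (A s)ᵀ + ε • (1 : Matrix (Fin 4) (Fin 4) ℝ)) i j) s := by
    intro s hs i j
    have hPs : (P s)ᵀ = P s := hPsymm s hs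
    have hRs : ((R s)⁻¹)ᵀ = (R s)⁻¹ := by
      rw [transpose_nonsing_inv, hRsymm s hs]
    have hAT : (A s)ᵀ = (X s)ᵀ - (2⁻¹:ℝ) • ((R s)⁻¹ * P s) := by
      simp only [hAdef]
      rw [transpose_sub, transpose_smul, transpose_mul, hPs, hRs]
    have hmat : A s * P s + P s * (A s)ᵀ + ε • (1 : Matrix (Fin 4) (Fin 4) ℝ)
        = X s * P s + P s * (X s)ᵀ - P s * (R s)⁻¹ * P s + ε • 1 := by
      rw [hAT]
      simp only [hAdef]
      rw [Matrix.sub_mul, Matrix.mul_sub, Matrix.smul_mul, Matrix.mul_smul,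
        ← Matrix.mul_assoc]
      have hZ : (2⁻¹:ℝ) • (P s * (R s)⁻¹ * P s) + (2⁻¹:ℝ) • (P s * (R s)⁻¹ * P s)
          = P s * (R s)⁻¹ * P s := by
        rw [← add_smul]; norm_num
      calc X s * P s - (2⁻¹:ℝ) • (P s * (R s)⁻¹ * P s)
            + (P s * (X s)ᵀ - (2⁻¹:ℝ) • (P s * (R s)⁻¹ * P s)) + ε • 1
          = X s * P s + P s * (X s)ᵀ
            - ((2⁻¹:ℝ) • (P s * (R s)⁻¹ * P s) + (2⁻¹:ℝ) • (P s * (R s)⁻¹ * P s)) + ε • 1 := by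
            abel
        _ = X s * P s + P s * (X s)ᵀ - P s * (R s)⁻¹ * P s + ε • 1 := by rw [hZ]
    rw [hmat]
    exact hP s hs i j
  intro t₀ ht₀
  have ht₀' : (0:ℝ) ≤ t₀ := ht₀.le
  refine Matrix.PosDef.of_dotProduct_mulVec_pos ?_ ?_
  · rw [Matrix.IsHermitian, conjTranspose_eq_transpose_of_trivial]
    exact hPsymm t₀ ht₀'
  intro w hw
  have hstarw : star w = w := funext fun i => star_trivial _
  rw [hstarw]
  -- the backward linear ODE
  set Mf : ℝ → Matrix (Fin 4) (Fin 4) ℝ := fun s => -(A s)ᵀ with hMdef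
  have hMcont : ∀ i j, ContinuousOn (fun s => Mf s i j) (Ici 0) := by
    intro i j
    have h := (hAcont j i).neg
    refine h.congr fun s _ => ?_
    simp [hMdef]
  obtain ⟨K, hK⟩ : ∃ K : ℝ, ∀ s ∈ Icc (0:ℝ) t₀, ∀ i j, |Mf s i j| ≤ K := by
    have hg : ContinuousOn (fun s => ∑ i : Fin 4, ∑ j : Fin 4, |Mf s i j|) (Icc 0 t₀) := by
      apply continuousOn_finset_sum; intro i _
      apply continuousOn_finset_sum; intro j _
      exact ((hMcont i j).mono Icc_subset_Ici_self).abs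
    obtain ⟨C, hC⟩ := (isCompact_Icc).exists_bound_of_continuousOn hg
    refine ⟨C, fun s hs i j => ?_⟩
    have h1 : |Mf s i j| ≤ ∑ j' : Fin 4, |Mf s i j'| :=
      Finset.single_le_sum (f := fun j' => |Mf s i j'|) (fun _ _ => abs_nonneg _)
        (Finset.mem_univ j)
    have h2 : ∑ j' : Fin 4, |Mf s i j'| ≤ ∑ i' : Fin 4, ∑ j' : Fin 4, |Mf s i' j'| :=
      Finset.single_le_sum (f := fun i' => ∑ j' : Fin 4, |Mf s i' j'|)
        (fun _ _ => Finset.sum_nonneg fun _ _ => abs_nonneg _) (Finset.mem_univ i)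
    have h3 := hC s hs
    rw [Real.norm_eq_abs, abs_of_nonneg (Finset.sum_nonneg fun _ _ =>
      Finset.sum_nonneg fun _ _ => abs_nonneg _)] at h3
    linarith
  have hK0 : 0 ≤ K := (abs_nonneg _).trans (hK 0 ⟨le_rfl, ht₀'⟩ 0 0)
  set κ := 4 * K with hκdef
  have hκ0 : 0 ≤ κ := by positivity
  have hMvec : ∀ s ∈ Icc (0:ℝ) t₀, ∀ x : Fin 4 → ℝ, ‖Mf s *ᵥ x‖ ≤ κ * ‖x‖ :=
    fun s hs x => mulVec_norm_le (hK s hs) x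
  set ρ := ‖w‖ * Real.exp (κ * t₀) + 1 with hρdef
  have hρpos : 0 < ρ := by positivity
  set v : ℝ → (Fin 4 → ℝ) → (Fin 4 → ℝ) := fun s x => Mf s *ᵥ projB ρ x with hvdef
  have hPL : IsPicardLindelof v (tmin := 0) (tmax := t₀) ⟨t₀, ⟨ht₀', le_rfl⟩⟩ w
      (κ * ρ * t₀ + 1).toNNReal 0 (κ * ρ).toNNReal ((2*κ).toNNReal) := by
    refine ⟨?_, ?_, ?_, ?_⟩
    · intro s hs
      apply LipschitzOnWith.of_dist_le_mul
      intro x _ y _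
      rw [dist_eq_norm, dist_eq_norm, Real.coe_toNNReal _ (by positivity)]
      have h1 : v s x - v s y = Mf s *ᵥ (projB ρ x - projB ρ y) := by
        simp only [hvdef]
        rw [mulVec_sub]
      calc ‖v s x - v s y‖ = ‖Mf s *ᵥ (projB ρ x - projB ρ y)‖ := by rw [h1]
        _ ≤ κ * ‖projB ρ x - projB ρ y‖ := hMvec s hs _
        _ ≤ κ * (2 * ‖x - y‖) := by
            have := projB_lip hρpos x y
            gcongr
        _ = 2 * κ * ‖x - y‖ := by ring
    · intro x _
      apply continuousOn_pi.2
      intro i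
      simp only [hvdef, mulVec, dotProduct]
      exact continuousOn_finset_sum _ fun j _ =>
        ((hMcont i j).mono Icc_subset_Ici_self).mul continuousOn_const
    · intro s hs x _
      rw [Real.coe_toNNReal _ (mul_nonneg hκ0 hρpos.le)]
      calc ‖v s x‖ ≤ κ * ‖projB ρ x‖ := hMvec s hs _
        _ ≤ κ * ρ := by
            have := norm_projB_le hρpos.le x
            gcongr
    · have hmax : max (t₀ - t₀) (t₀ - 0) = t₀ := by
        rw [sub_self, sub_zero]; exact max_eq_right ht₀'
      dsimp only
      rw [Real.coe_toNNReal _ (mul_nonneg hκ0 hρpos.le),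
        Real.coe_toNNReal _ (add_nonneg (mul_nonneg (mul_nonneg hκ0 hρpos.le) ht₀') zero_le_one),
        NNReal.coe_zero]
      rw [hmax]
      nlinarith [mul_nonneg (mul_nonneg hκ0 hρpos.le) ht₀']
  obtain ⟨ψ, hψ0', hψd⟩ := hPL.exists_eq_forall_mem_Icc_hasDerivWithinAt₀
  have hψ0 : ψ t₀ = w := hψ0'
  have hψcont : ContinuousOn ψ (Icc 0 t₀) := fun s hs => (hψd s hs).continuousWithinAt
  -- Gronwall estimate
  have hbound : ∀ u ∈ Icc (0:ℝ) t₀, ‖ψ u‖ ≤ ‖w‖ * Real.exp (κ * t₀) := by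
    set g : ℝ → (Fin 4 → ℝ) := fun s => ψ (t₀ - s) with hgdef
    have hgcont : ContinuousOn g (Icc 0 t₀) := by
      apply hψcont.comp (Continuous.continuousOn (by continuity))
      intro s hs
      exact ⟨by linarith [hs.2], by linarith [hs.1]⟩
    have hgd : ∀ s ∈ Ico (0:ℝ) t₀,
        HasDerivWithinAt g (-(v (t₀ - s) (ψ (t₀ - s)))) (Ici s) s := by
      intro s hs
      have hu : t₀ - s ∈ Icc (0:ℝ) t₀ := ⟨by linarith [hs.2], by linarith [hs.1]⟩
      have hinner : HasDerivWithinAt (fun s' : ℝ => t₀ - s') (-1) (Icc s t₀) s :=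
        ((hasDerivAt_id s).const_sub t₀).hasDerivWithinAt
      have hmaps : MapsTo (fun s' : ℝ => t₀ - s') (Icc s t₀) (Icc 0 t₀) := by
        intro u hu'
        simp only [mem_Icc] at hu' ⊢
        constructor <;> linarith [hs.1, hu'.1, hu'.2]
      have hcomp := (hψd (t₀ - s) hu).scomp s hinner hmaps
      have hg2 : HasDerivWithinAt g (-(v (t₀ - s) (ψ (t₀ - s)))) (Icc s t₀) s := by
        have e : (-1:ℝ) • v (t₀ - s) (ψ (t₀ - s)) = -(v (t₀ - s) (ψ (t₀ - s))) := by simp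
        rw [← e]; exact hcomp
      refine hg2.mono_of_mem_nhdsWithin (mem_nhdsWithin.2 ⟨Iio t₀, isOpen_Iio, hs.2, ?_⟩)
      intro u hu'
      exact ⟨hu'.2, le_of_lt hu'.1⟩
    have ha : ‖g 0‖ ≤ ‖w‖ := by simp [hgdef, hψ0]
    have hbd : ∀ s ∈ Ico (0:ℝ) t₀,
        ‖-(v (t₀ - s) (ψ (t₀ - s)))‖ ≤ κ * ‖g s‖ + 0 := by
      intro s hs
      have hu : t₀ - s ∈ Icc (0:ℝ) t₀ := ⟨by linarith [hs.2], by linarith [hs.1]⟩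
      rw [norm_neg, add_zero]
      calc ‖v (t₀ - s) (ψ (t₀ - s))‖ ≤ κ * ‖projB ρ (ψ (t₀ - s))‖ := hMvec _ hu _
        _ ≤ κ * ‖ψ (t₀ - s)‖ := by
            have := norm_projB_le_self hρpos.le (ψ (t₀ - s))
            gcongr
        _ = κ * ‖g s‖ := rfl
    have hG := norm_le_gronwallBound_of_norm_deriv_right_le hgcont hgd ha hbd
    intro u hu
    have hs : t₀ - u ∈ Icc (0:ℝ) t₀ := ⟨by linarith [hu.2], by linarith [hu.1]⟩
    have h1 := hG (t₀ - u) hs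
    rw [gronwallBound_ε0, sub_zero] at h1
    have h2 : ‖w‖ * Real.exp (κ * (t₀ - u)) ≤ ‖w‖ * Real.exp (κ * t₀) := by
      have hle : κ * (t₀ - u) ≤ κ * t₀ := by nlinarith [hu.1]
      exact mul_le_mul_of_nonneg_left (Real.exp_le_exp.2 hle) (norm_nonneg w)
    have h3 : g (t₀ - u) = ψ u := by simp [hgdef]
    rw [h3] at h1
    linarith
  have hψball : ∀ u ∈ Icc (0:ℝ) t₀, ‖ψ u‖ ≤ ρ := fun u hu =>
    (hbound u hu).trans (by rw [hρdef]; linarith)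
  have hψode : ∀ s ∈ Icc (0:ℝ) t₀, HasDerivWithinAt ψ (Mf s *ᵥ ψ s) (Icc 0 t₀) s := by
    intro s hs
    have h := hψd s hs
    simp only [hvdef] at h
    rwa [projB_eq_self (hψball s hs)] at h
  -- the quadratic form
  set φ : ℝ → ℝ := fun s => ∑ i : Fin 4, ∑ j : Fin 4, ψ s i * (P s i j * ψ s j) with hφdef
  have hφd : ∀ s ∈ Icc (0:ℝ) t₀,
      HasDerivWithinAt φ (ε * (ψ s ⬝ᵥ ψ s)) (Icc 0 t₀) s := by
    intro s hs
    have hψi : ∀ i, HasDerivWithinAt (fun u => ψ u i) ((Mf s *ᵥ ψ s) i) (Icc 0 t₀) s :=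
      fun i => hasDerivWithinAt_pi.1 (hψode s hs) i
    have hPij : ∀ i j, HasDerivWithinAt (fun u => P u i j)
        ((A s * P s + P s * (A s)ᵀ + ε • (1 : Matrix (Fin 4) (Fin 4) ℝ)) i j) (Icc 0 t₀) s :=
      fun i j => (hPder s hs.1 i j).hasDerivWithinAt
    have h2 : HasDerivWithinAt φ
        ((Mf s *ᵥ ψ s) ⬝ᵥ (P s *ᵥ ψ s)
          + ψ s ⬝ᵥ ((A s * P s + P s * (A s)ᵀ + ε • (1 : Matrix (Fin 4) (Fin 4) ℝ)) *ᵥ ψ s)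
          + ψ s ⬝ᵥ (P s *ᵥ (Mf s *ᵥ ψ s))) (Icc 0 t₀) s := by
      rw [← sum_to_dot (P s) (A s * P s + P s * (A s)ᵀ + ε • 1) (ψ s) (Mf s *ᵥ ψ s)]
      simp only [hφdef]
      apply HasDerivWithinAt.fun_sum
      intro i _
      apply HasDerivWithinAt.fun_sum
      intro j _
      exact (hψi i).mul ((hPij i j).mul (hψi j))
    have hMv : Mf s *ᵥ ψ s = -((A s)ᵀ *ᵥ ψ s) := by
      simp only [hMdef]
      rw [neg_mulVec]
    rw [hMv] at h2
    rwa [cancel_identity (A s) (P s) (hPsymm s hs.1) ε (ψ s)] at h2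
  have hφcont : ContinuousOn φ (Icc 0 t₀) := fun s hs => (hφd s hs).continuousWithinAt
  have hmono : MonotoneOn φ (Icc 0 t₀) := by
    refine monotoneOn_of_hasDerivWithinAt_nonneg (convex_Icc 0 t₀) hφcont
      (f' := fun s => ε * (ψ s ⬝ᵥ ψ s)) (fun x hx => ?_) (fun x hx => ?_)
    · rw [interior_Icc] at hx
      exact (hφd x (Ioo_subset_Icc_self hx)).mono interior_subset
    · exact mul_nonneg hε.le (Finset.sum_nonneg fun i _ => mul_self_nonneg _)
  have hwpos : 0 < ‖w‖ := norm_pos_iff.2 hw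
  obtain ⟨δ, hδ0, hδ⟩ : ∃ δ > 0, ∀ u ∈ Icc (0:ℝ) t₀, dist u t₀ < δ → dist (ψ u) w < ‖w‖ / 2 := by
    have hc := hψcont t₀ (right_mem_Icc.2 ht₀')
    rw [Metric.continuousWithinAt_iff] at hc
    obtain ⟨δ, hδ0, h⟩ := hc (‖w‖/2) (by positivity)
    refine ⟨δ, hδ0, fun u hu hd => ?_⟩
    have := h hu hd
    rwa [hψ0] at this
  set s₁ := max 0 (t₀ - δ/2) with hs₁def
  have hs₁mem : s₁ ∈ Icc (0:ℝ) t₀ := ⟨le_max_left _ _, max_le ht₀' (by linarith)⟩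
  have hs₁lt : s₁ < t₀ := max_lt ht₀ (by linarith)
  have hne : ∀ u ∈ Icc s₁ t₀, ψ u ≠ 0 := by
    intro u hu
    have hu' : u ∈ Icc (0:ℝ) t₀ := ⟨le_trans (le_max_left _ _) hu.1, hu.2⟩
    have hdist : dist u t₀ < δ := by
      rw [Real.dist_eq, abs_of_nonpos (by linarith [hu.2] : u - t₀ ≤ 0)]
      have h1 : t₀ - δ/2 ≤ s₁ := le_max_right _ _
      have h2 := hu.1
      linarith
    intro h0
    have h3 := hδ u hu' hdist
    rw [h0, dist_zero_left] at h3
    linarith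
  have hstrict : StrictMonoOn φ (Icc s₁ t₀) := by
    refine strictMonoOn_of_hasDerivWithinAt_pos (convex_Icc s₁ t₀)
      (hφcont.mono (Icc_subset_Icc hs₁mem.1 le_rfl))
      (f' := fun s => ε * (ψ s ⬝ᵥ ψ s)) (fun x hx => ?_) (fun x hx => ?_)
    · rw [interior_Icc] at hx
      exact (hφd x ⟨le_trans hs₁mem.1 hx.1.le, hx.2.le⟩).mono
        (by rw [interior_Icc]; exact fun u hu => ⟨le_trans hs₁mem.1 hu.1.le, hu.2.le⟩)
    · rw [interior_Icc] at hx
      have hx' : x ∈ Icc s₁ t₀ := Ioo_subset_Icc_self hx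
      have hψx := hne x hx'
      obtain ⟨i, hi⟩ : ∃ i, ψ x i ≠ 0 := by
        by_contra hcon
        push_neg at hcon
        exact hψx (funext hcon)
      have hsum : 0 < ψ x ⬝ᵥ ψ x :=
        Finset.sum_pos' (fun i _ => mul_self_nonneg _)
          ⟨i, Finset.mem_univ i, mul_self_pos.2 hi⟩
      exact mul_pos hε hsum
  have h1 : φ s₁ < φ t₀ := hstrict (left_mem_Icc.2 hs₁lt.le) (right_mem_Icc.2 hs₁lt.le) hs₁lt
  have h2 : φ 0 ≤ φ s₁ := hmono (left_mem_Icc.2 ht₀') hs₁mem hs₁mem.1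
  have h0 : 0 ≤ φ 0 := by
    have hsd := hP0.dotProduct_mulVec_nonneg (ψ 0)
    have hst : star (ψ 0) = ψ 0 := funext fun i => star_trivial _
    rw [hst] at hsd
    calc (0:ℝ) ≤ ψ 0 ⬝ᵥ (P 0 *ᵥ ψ 0) := hsd
      _ = φ 0 := by simp [hφdef, dotProduct, mulVec, Finset.mul_sum]
  have hfin : w ⬝ᵥ (P t₀ *ᵥ w) = φ t₀ := by
    rw [← hψ0]
    simp [hφdef, dotProduct, mulVec, Finset.mul_sum]
  rw [hfin]
  linarith
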